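/- If X is an n×n complex matrix satisfying X² + 2iγX + λ²I = 0 with γ, λ nonzero reals, then exp(X) = e^{-iγ}[(cos σ + (iγ/σ) sin σ)·I + (sin σ / σ)·X], where σ is the positive square root of λ² + γ². -/

import Mathlib

open Matrix NormedSpace Complex

lemma exp_sq_neg {n : ℕ} (A : Matrix (Fin n) (Fin n) ℂ) (s : ℝ) (hs : s ≠ 0)
    (h : A ^ 2 = (-((s : ℂ) ^ 2)) • 1) :
    NormedSpace.exp A = ((Real.cos s : ℂ)) • (1 : Matrix (Fin n) (Fin n) ℂ)
      + (((Real.sin s / s : ℝ) : ℂ)) • A := by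
  have heven : ∀ k : ℕ, A ^ (2 * k) = ((-1 : ℂ) ^ k * (s : ℂ) ^ (2 * k)) • 1 := by
    intro k
    rw [pow_mul, h, smul_pow, one_pow, neg_pow, ← pow_mul]
  rw [exp_eq_tsum (𝕂 := ℂ)]
  show (∑' m : ℕ, ((m.factorial : ℂ)⁻¹) • A ^ m) = _
  refine (HasSum.even_add_odd ?_ ?_).tsum_eq
  · have hc := (Complex.hasSum_cos (s : ℂ)).smul_const (1 : Matrix (Fin n) (Fin n) ℂ)
    rw [← Complex.ofReal_cos] at hc
    convert hc using 2 with k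
    rw [heven, smul_smul]
    congr 1
    field_simp
  · have hs' := ((Complex.hasSum_sin (s : ℂ)).div_const (s : ℂ)).smul_const A
    rw [← Complex.ofReal_sin] at hs'
    have : ((Real.sin s / s : ℝ) : ℂ) = (Real.sin s : ℂ) / (s : ℂ) := by push_cast; ring
    rw [← this] at hs'
    convert hs' using 2 with k
    have hodd : A ^ (2 * k + 1) = ((-1 : ℂ) ^ k * (s : ℂ) ^ (2 * k)) • A := by
      rw [pow_succ, heven, smul_mul_assoc, one_mul]
    rw [hodd, smul_smul]
    congr 1
    have hsC : (s : ℂ) ≠ 0 := Complex.ofReal_ne_zero.mpr hs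
    have hf : (((2 * k + 1).factorial : ℂ)) ≠ 0 := Nat.cast_ne_zero.mpr (2 * k + 1).factorial_ne_zero
    rw [inv_mul_eq_div, div_div, div_eq_div_iff hf (mul_ne_zero hf hsC)]
    ring

lemma exp_smul_one {n : ℕ} (c : ℂ) :
    NormedSpace.exp (c • (1 : Matrix (Fin n) (Fin n) ℂ)) = Complex.exp c • 1 := by
  rw [exp_eq_tsum (𝕂 := ℂ)]
  show (∑' m : ℕ, ((m.factorial : ℂ)⁻¹) • (c • (1 : Matrix (Fin n) (Fin n) ℂ)) ^ m) = _
  have h : ∀ k : ℕ, ((k.factorial : ℂ)⁻¹) • (c • (1 : Matrix (Fin n) (Fin n) ℂ)) ^ k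
      = ((k.factorial : ℂ)⁻¹ • c ^ k) • 1 := by
    intro k; rw [smul_pow, one_pow, smul_smul]; rfl
  simp_rw [h]
  rw [(NormedSpace.expSeries_summable' (𝕂 := ℂ) c).tsum_smul_const, Complex.exp_eq_exp_ℂ, exp_eq_tsum (𝕂 := ℂ)]

theorem exp_of_quadratic_shifted {n : ℕ} (X : Matrix (Fin n) (Fin n) ℂ)
    (γ lam : ℝ) (hγ : γ ≠ 0) (hlam : lam ≠ 0)
    (hmin : X ^ 2 + (2 * Complex.I * (γ : ℂ)) • X
        + ((lam : ℂ) ^ 2) • (1 : Matrix (Fin n) (Fin n) ℂ) = 0)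
    (σ : ℝ) (hσ : σ = Real.sqrt (lam ^ 2 + γ ^ 2)) :
    NormedSpace.exp X = Complex.exp (-(Complex.I * (γ : ℂ))) •
      ((((Real.cos σ : ℂ) + Complex.I * (γ : ℂ) / (σ : ℂ) * (Real.sin σ : ℂ))) •
          (1 : Matrix (Fin n) (Fin n) ℂ)
        + (((Real.sin σ / σ : ℝ) : ℂ)) • X) := by
  have hpos : (0 : ℝ) < lam ^ 2 + γ ^ 2 :=
    add_pos_of_pos_of_nonneg ((sq_nonneg lam).lt_of_ne' (pow_ne_zero 2 hlam)) (sq_nonneg γ)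
  have hσ2 : σ ^ 2 = lam ^ 2 + γ ^ 2 := by
    rw [hσ, Real.sq_sqrt hpos.le]
  have hσ0 : σ ≠ 0 := by
    have : 0 < σ := hσ ▸ Real.sqrt_pos.mpr hpos
    exact this.ne'
  have hσC : ((σ : ℂ)) ^ 2 = ((lam : ℂ)) ^ 2 + ((γ : ℂ)) ^ 2 := by
    exact_mod_cast congrArg (Complex.ofReal) hσ2
  set c : ℂ := Complex.I * (γ : ℂ) with hc
  set Y : Matrix (Fin n) (Fin n) ℂ := X + c • 1 with hY
  have hY2 : Y ^ 2 = (-((σ : ℂ) ^ 2)) • 1 := by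
    have hexp2 : Y ^ 2 = X ^ 2 + (2 * c) • X + (c ^ 2) • 1 := by
      simp only [hY, pow_two, mul_add, add_mul, smul_mul_assoc, mul_smul_comm, one_mul,
        mul_one, smul_smul, smul_add, two_mul, add_smul]
      abel
    have h2c : (2 : ℂ) * c = 2 * Complex.I * (γ : ℂ) := by rw [hc]; ring
    have hmin' : X ^ 2 + (2 * Complex.I * (γ : ℂ)) • X = -(((lam : ℂ) ^ 2) • 1) :=
      eq_neg_of_add_eq_zero_left hmin
    rw [hexp2, h2c, hmin', ← neg_smul, ← add_smul]
    congr 1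
    rw [hc, hσC]
    linear_combination ((γ : ℂ) ^ 2) * Complex.I_sq
  have hXdecomp : X = (-c) • 1 + Y := by
    rw [hY, neg_smul]
    abel
  have hcomm : Commute ((-c) • (1 : Matrix (Fin n) (Fin n) ℂ)) Y :=
    (Commute.one_left Y).smul_left (-c)
  calc NormedSpace.exp X = NormedSpace.exp ((-c) • 1 + Y) := by rw [← hXdecomp]
    _ = _ := by
      rw [Matrix.exp_add_of_commute _ _ hcomm, exp_smul_one,
        exp_sq_neg Y σ hσ0 hY2, smul_mul_assoc, one_mul]
      rw [show -c = -(Complex.I * (γ : ℂ)) from by rw [hc]]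
      congr 1
      rw [hY, smul_add, smul_smul]
      have hcoef : ((Real.sin σ / σ : ℝ) : ℂ) * c
          = Complex.I * (γ : ℂ) / (σ : ℂ) * (Real.sin σ : ℂ) := by
        have hsC : (σ : ℂ) ≠ 0 := Complex.ofReal_ne_zero.mpr hσ0
        rw [hc]
        push_cast
        field_simp
      rw [hcoef, add_smul]
      abel
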